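/- For every LR-string S distinct from ε, among all generalized strings S' with |S'| < |S| and r(S') < r(S), the one maximizing r(S') is P_L(S); and among all S' with |S'| < |S| and r(S') > r(S), the one minimizing r(S') is P_R(S). -/

import Mathlib

open List

/-- `r`-value of an LR-string (`true` = R, `false` = L):
`r(ε) = 1`, `r(SL) = r(S) - 2^(-|SL|)`, `r(SR) = r(S) + 2^(-|SR|)`. -/
def rval (S : List Bool) : ℚ :=
  1 + ∑ i ∈ Finset.range S.length,
      (if S.getD i false then ((2:ℚ)^(i+1))⁻¹ else -((2:ℚ)^(i+1))⁻¹)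

/-- Generalized strings: LR-strings plus the formal symbols `R⁻¹ = inv true`
and `L⁻¹ = inv false`. -/
inductive Gen where
  | inv : Bool → Gen
  | str : List Bool → Gen
deriving DecidableEq

/-- Left parent: `P_L(ε) = R⁻¹`, `P_L(SL) = P_L(S)`, `P_L(SR) = S`. -/
def PL (S : List Bool) : Gen :=
  match S.reverse.dropWhile (· = false) with
  | [] => Gen.inv true
  | _ :: t => Gen.str t.reverse

/-- Right parent: `P_R(ε) = L⁻¹`, `P_R(SL) = S`, `P_R(SR) = P_R(S)`. -/
def PR (S : List Bool) : Gen :=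
  match S.reverse.dropWhile (· = true) with
  | [] => Gen.inv false
  | _ :: t => Gen.str t.reverse

/-- Extension of `r` to generalized strings: `r(R⁻¹) = 0`, `r(L⁻¹) = 2`. -/
def rg : Gen → ℚ
  | Gen.inv true => 0
  | Gen.inv false => 2
  | Gen.str S => rval S

/-- Length of a generalized string; the formal symbols have length `-1`. -/
def glen : Gen → ℤ
  | Gen.inv _ => -1
  | Gen.str S => S.length

/-- Position function: `N(ε) = 0`, `N(SL) = 2N(S)+1`, `N(SR) = 2N(S)+2`. -/
def posN (S : List Bool) : ℕ :=
  ∑ i ∈ Finset.range S.length, (if S.getD i false then 2 else 1) * 2^(S.length - 1 - i)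

/-- The alternating-block string `S(k₀,…,k_m) = R^{k₀} L^{k₁} R^{k₂} ⋯`. -/
def blockStr (ks : List ℕ) : List Bool :=
  (((List.range ks.length).zip ks).map (fun p => List.replicate p.2 (decide (p.1 % 2 = 0)))).flatten

/-- Continued fraction `[q₀,…,q_m]`. -/
def cf : List ℚ → ℚ
  | [] => 0
  | [q] => q
  | q :: qs => q + (cf qs)⁻¹

/-- Admissible continued-fraction index sequences: `[q₀]` with `q₀ ≥ 1`, or
`[q₀,…,q_m]` with `m ≥ 1`, intermediate `qᵢ ≥ 1`, and `q_m ≥ 2`. -/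
def CFAdmissible (qs : List ℕ) : Prop :=
  qs ≠ [] ∧ (qs.length = 1 → 1 ≤ qs.getD 0 0) ∧
    (∀ i, 1 ≤ i → i + 1 < qs.length → 1 ≤ qs.getD i 0) ∧
    (2 ≤ qs.length → 2 ≤ qs.getLastD 0)

/-- The map `f([q₀,…,q_m]) = S(q₀,…,q_{m-1},q_m - 1)`. -/
def cfToStr (qs : List ℕ) : List Bool :=
  blockStr (qs.dropLast ++ [qs.getLastD 0 - 1])

lemma rval_append (S : List Bool) (b : Bool) :
    rval (S ++ [b]) = rval S + (if b then 1 else -1) * ((2:ℚ)^(S.length+1))⁻¹ := by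
  unfold rval
  rw [List.length_append, List.length_singleton, Finset.sum_range_succ]
  have h1 : ∀ i ∈ Finset.range S.length,
      (if (S ++ [b]).getD i false then ((2:ℚ)^(i+1))⁻¹ else -((2:ℚ)^(i+1))⁻¹)
      = (if S.getD i false then ((2:ℚ)^(i+1))⁻¹ else -((2:ℚ)^(i+1))⁻¹) := by
    intro i hi
    rw [Finset.mem_range] at hi
    rw [List.getD_append _ _ _ _ hi]
  rw [Finset.sum_congr rfl h1]
  have h2 : (S ++ [b]).getD S.length false = b := by
    simp [List.getD_append_right]
  rw [h2]
  cases b <;> simp <;> ring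

lemma rval_nil : rval [] = 1 := by simp [rval]

lemma rval_app_true (T : List Bool) (k : ℕ) :
    rval (T ++ true :: List.replicate k false) = rval T + ((2:ℚ)^(T.length+1+k))⁻¹ := by
  induction k with
  | zero => simpa using rval_append T true
  | succ k ih =>
      have : T ++ true :: List.replicate (k+1) false
          = (T ++ true :: List.replicate k false) ++ [false] := by
        simp [List.replicate_succ' (n := k)]
      rw [this, rval_append, ih]
      have hl : (T ++ true :: List.replicate k false).length = T.length + 1 + k := by
        simp [Nat.add_comm, Nat.add_assoc, Nat.add_left_comm]
      rw [hl]
      have h2 : (2:ℚ)^(T.length+1+k+1) = 2^(T.length+1+k) * 2 := by ring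
      rw [h2]
      have hp : (0:ℚ) < 2^(T.length+1+k) := by positivity
      field_simp
      simp only [Bool.false_eq_true, if_true, if_false]
      ring

lemma rval_app_false (T : List Bool) (k : ℕ) :
    rval (T ++ false :: List.replicate k true) = rval T - ((2:ℚ)^(T.length+1+k))⁻¹ := by
  induction k with
  | zero =>
      have := rval_append T false
      simpa [sub_eq_add_neg] using this
  | succ k ih =>
      have : T ++ false :: List.replicate (k+1) true
          = (T ++ false :: List.replicate k true) ++ [true] := by
        simp [List.replicate_succ' (n := k)]
      rw [this, rval_append, ih]
      have hl : (T ++ false :: List.replicate k true).length = T.length + 1 + k := by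
        simp [Nat.add_comm, Nat.add_assoc, Nat.add_left_comm]
      rw [hl]
      have h2 : (2:ℚ)^(T.length+1+k+1) = 2^(T.length+1+k) * 2 := by ring
      rw [h2]
      have hp : (0:ℚ) < 2^(T.length+1+k) := by positivity
      field_simp
      simp only [Bool.false_eq_true, if_true, if_false]
      ring

lemma rval_dyadic (S : List Bool) : ∃ a : ℤ, rval S = a * ((2:ℚ)^S.length)⁻¹ := by
  induction S using List.reverseRecOn with
  | nil => exact ⟨1, by simp [rval_nil]⟩
  | append_singleton T b ih =>
      obtain ⟨a, ha⟩ := ih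
      refine ⟨2*a + (if b then 1 else -1), ?_⟩
      rw [rval_append, ha]
      have hp : (0:ℚ) < 2^T.length := by positivity
      simp only [List.length_append, List.length_singleton]
      have h2 : (2:ℚ)^(T.length+1) = 2^T.length * 2 := by ring
      rw [h2]
      push_cast
      cases b <;> simp <;> field_simp <;> ring

lemma rval_rep_false (n : ℕ) : rval (List.replicate n false) = ((2:ℚ)^n)⁻¹ := by
  induction n with
  | zero => simp [rval_nil]
  | succ n ih =>
      rw [List.replicate_succ' , rval_append, ih]
      have hp : (0:ℚ) < 2^n := by positivity
      simp only [List.length_replicate, if_neg (by simp : ¬ (false = true))]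
      have h2 : (2:ℚ)^(n+1) = 2^n * 2 := by ring
      rw [h2]; field_simp; ring

lemma rval_rep_true (n : ℕ) : rval (List.replicate n true) = 2 - ((2:ℚ)^n)⁻¹ := by
  induction n with
  | zero => norm_num [rval_nil]
  | succ n ih =>
      rw [List.replicate_succ' , rval_append, ih]
      have hp : (0:ℚ) < 2^n := by positivity
      simp only [List.length_replicate, if_pos rfl]
      have h2 : (2:ℚ)^(n+1) = 2^n * 2 := by ring
      rw [h2]; field_simp; simp only [if_true]; ring

lemma head_dropWhile_false {l t : List Bool} (h : l.dropWhile (· = false) = false :: t) : False := by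
  have h0 : 0 < (l.dropWhile (· = false)).length := by rw [h]; simp
  have h1 := List.dropWhile_get_zero_not (· = false) l h0
  have h2 : (l.dropWhile (· = false)).get ⟨0, h0⟩ = false := by
    have := List.get_of_eq h ⟨0, h0⟩
    rw [this]; rfl
  rw [h2] at h1; simp at h1

lemma head_dropWhile_true {l t : List Bool} (h : l.dropWhile (· = true) = true :: t) : False := by
  have h0 : 0 < (l.dropWhile (· = true)).length := by rw [h]; simp
  have h1 := List.dropWhile_get_zero_not (· = true) l h0
  have h2 : (l.dropWhile (· = true)).get ⟨0, h0⟩ = true := by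
    have := List.get_of_eq h ⟨0, h0⟩
    rw [this]; rfl
  rw [h2] at h1; simp at h1

lemma PL_cases (S : List Bool) (hS : S ≠ []) :
    (PL S = Gen.inv true ∧ rval S = ((2:ℚ)^S.length)⁻¹) ∨
    (∃ T : List Bool, PL S = Gen.str T ∧ T.length < S.length ∧
      rval S = rval T + ((2:ℚ)^S.length)⁻¹) := by
  rcases hd : S.reverse.dropWhile (· = false) with _ | ⟨b, t⟩
  · left
    constructor
    · unfold PL; rw [hd]
    · rw [List.dropWhile_eq_nil_iff] at hd
      have hrep : S = List.replicate S.length false := by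
        apply List.eq_replicate_of_mem
        intro x hx
        have := hd x (by simpa using hx)
        simpa using this
      calc rval S = rval (List.replicate S.length false) := by rw [← hrep]
        _ = ((2:ℚ)^S.length)⁻¹ := rval_rep_false S.length
  · right
    have hb : b = true := by
      cases b
      · exact absurd hd (fun h => head_dropWhile_false h)
      · rfl
    subst hb
    have hsplit : S.reverse = S.reverse.takeWhile (· = false) ++ (true :: t) := by
      rw [← hd, List.takeWhile_append_dropWhile]
    set tw := S.reverse.takeWhile (· = false) with htw
    have htwrep : tw.reverse = List.replicate tw.reverse.length false := by
      apply List.eq_replicate_of_mem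
      intro x hx
      have := List.mem_takeWhile_imp (List.mem_reverse.mp hx)
      simpa using this
    set k := tw.reverse.length with hk
    have hSeq : S = t.reverse ++ true :: List.replicate k false := by
      conv_lhs => rw [← List.reverse_reverse S, hsplit]
      rw [List.reverse_append, ← htwrep]
      simp
    have hlen : (t.reverse ++ true :: List.replicate k false).length
        = t.reverse.length + 1 + k := by
      simp [Nat.add_comm, Nat.add_assoc, Nat.add_left_comm]
    refine ⟨t.reverse, ?_, ?_, ?_⟩
    · unfold PL; rw [hd]
    · rw [hSeq, hlen]; simp; omega
    · rw [hSeq, hlen, rval_app_true]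

lemma PR_cases (S : List Bool) (hS : S ≠ []) :
    (PR S = Gen.inv false ∧ rval S = 2 - ((2:ℚ)^S.length)⁻¹) ∨
    (∃ T : List Bool, PR S = Gen.str T ∧ T.length < S.length ∧
      rval S = rval T - ((2:ℚ)^S.length)⁻¹) := by
  rcases hd : S.reverse.dropWhile (· = true) with _ | ⟨b, t⟩
  · left
    constructor
    · unfold PR; rw [hd]
    · rw [List.dropWhile_eq_nil_iff] at hd
      have hrep : S = List.replicate S.length true := by
        apply List.eq_replicate_of_mem
        intro x hx
        have := hd x (by simpa using hx)
        simpa using this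
      calc rval S = rval (List.replicate S.length true) := by rw [← hrep]
        _ = 2 - ((2:ℚ)^S.length)⁻¹ := rval_rep_true S.length
  · right
    have hb : b = false := by
      cases b
      · rfl
      · exact absurd hd (fun h => head_dropWhile_true h)
    subst hb
    have hsplit : S.reverse = S.reverse.takeWhile (· = true) ++ (false :: t) := by
      rw [← hd, List.takeWhile_append_dropWhile]
    set tw := S.reverse.takeWhile (· = true) with htw
    have htwrep : tw.reverse = List.replicate tw.reverse.length true := by
      apply List.eq_replicate_of_mem
      intro x hx
      have := List.mem_takeWhile_imp (List.mem_reverse.mp hx)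
      simpa using this
    set k := tw.reverse.length with hk
    have hSeq : S = t.reverse ++ false :: List.replicate k true := by
      conv_lhs => rw [← List.reverse_reverse S, hsplit]
      rw [List.reverse_append, ← htwrep]
      simp
    have hlen : (t.reverse ++ false :: List.replicate k true).length
        = t.reverse.length + 1 + k := by
      simp [Nat.add_comm, Nat.add_assoc, Nat.add_left_comm]
    refine ⟨t.reverse, ?_, ?_, ?_⟩
    · unfold PR; rw [hd]
    · rw [hSeq, hlen]; simp; omega
    · rw [hSeq, hlen, rval_app_false]

lemma rg_dyadic (n : ℕ) (T : Gen) (h : glen T < (n:ℤ)) :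
    ∃ a : ℤ, rg T = a * ((2:ℚ)^n)⁻¹ := by
  cases T with
  | inv b =>
      cases b
      · refine ⟨2^(n+1), ?_⟩
        have hp : (0:ℚ) < 2^n := by positivity
        show (2:ℚ) = ((2:ℤ)^(n+1) : ℤ) * ((2:ℚ)^n)⁻¹
        push_cast
        field_simp
        ring
      · exact ⟨0, by simp [rg]⟩
  | str U =>
      obtain ⟨b, hb⟩ := rval_dyadic U
      have hU : U.length < n := by simp only [glen] at h; exact_mod_cast h
      refine ⟨b * 2^(n - U.length), ?_⟩
      show rval U = _
      rw [hb]
      have h2 : (2:ℚ)^n = 2^U.length * 2^(n - U.length) := by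
        rw [← pow_add]
        congr 1
        omega
      have hp1 : (0:ℚ) < 2^U.length := by positivity
      have hp2 : (0:ℚ) < 2^(n - U.length) := by positivity
      rw [h2]
      push_cast
      field_simp

lemma dyadic_lt {n : ℕ} {x y : ℚ} (a c : ℤ) (hx : x = a * ((2:ℚ)^n)⁻¹)
    (hy : y = c * ((2:ℚ)^n)⁻¹) (h : x < y) : x ≤ y - ((2:ℚ)^n)⁻¹ := by
  have hp : (0:ℚ) < 2^n := by positivity
  have hac : (a:ℚ) < c := by
    rw [hx, hy] at h
    have := mul_lt_mul_of_pos_right h hp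
    field_simp at this
    exact_mod_cast this
  have : a + 1 ≤ c := by exact_mod_cast hac
  rw [hx, hy]
  have : (a:ℚ) ≤ c - 1 := by
    have h' : (a:ℚ) + 1 ≤ c := by exact_mod_cast this
    linarith
  rw [sub_eq_add_neg, ← neg_one_mul, ← add_mul]
  apply mul_le_mul_of_nonneg_right _ (by positivity)
  linarith

/-- Among generalized strings `S'` with `|S'| < |S|` and `r(S') < r(S)`, the one
maximizing `r(S')` is `P_L(S)`; dually, among those with `r(S') > r(S)`, the one
minimizing `r(S')` is `P_R(S)`. -/
theorem stmt7 (S : List Bool) (hS : S ≠ []) :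
    (glen (PL S) < (S.length : ℤ) ∧ rg (PL S) < rval S ∧
      ∀ T : Gen, glen T < (S.length : ℤ) → rg T < rval S → rg T ≤ rg (PL S)) ∧
    (glen (PR S) < (S.length : ℤ) ∧ rval S < rg (PR S) ∧
      ∀ T : Gen, glen T < (S.length : ℤ) → rval S < rg T → rg (PR S) ≤ rg T) := by
  have hp : (0:ℚ) < (2^S.length)⁻¹ := by positivity
  obtain ⟨c, hc⟩ := rval_dyadic S
  have hPL : glen (PL S) < (S.length : ℤ) ∧ rg (PL S) = rval S - ((2:ℚ)^S.length)⁻¹ := by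
    rcases PL_cases S hS with ⟨hpl, hr⟩ | ⟨T, hpl, hlt, hr⟩
    · refine ⟨by rw [hpl]; show (-1:ℤ) < _; omega, ?_⟩
      rw [hpl, hr]; simp [rg]
    · refine ⟨by rw [hpl]; show (T.length:ℤ) < _; exact_mod_cast hlt, ?_⟩
      rw [hpl]; show rval T = _; rw [hr]; ring
  have hPR : glen (PR S) < (S.length : ℤ) ∧ rg (PR S) = rval S + ((2:ℚ)^S.length)⁻¹ := by
    rcases PR_cases S hS with ⟨hpr, hr⟩ | ⟨T, hpr, hlt, hr⟩
    · refine ⟨by rw [hpr]; show (-1:ℤ) < _; omega, ?_⟩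
      rw [hpr, hr]; show (2:ℚ) = _; ring
    · refine ⟨by rw [hpr]; show (T.length:ℤ) < _; exact_mod_cast hlt, ?_⟩
      rw [hpr]; show rval T = _; rw [hr]; ring
  refine ⟨⟨hPL.1, ?_, ?_⟩, ⟨hPR.1, ?_, ?_⟩⟩
  · rw [hPL.2]; linarith
  · intro T hT hlt
    obtain ⟨a, ha⟩ := rg_dyadic S.length T hT
    have := dyadic_lt a c ha hc hlt
    rw [hPL.2]; linarith
  · rw [hPR.2]; linarith
  · intro T hT hlt
    obtain ⟨a, ha⟩ := rg_dyadic S.length T hT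
    have := dyadic_lt c a hc ha hlt
    rw [hPR.2]; linarith
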